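/- Let σ: R^K → R^K be the softmax function, σ(x)_i = e^{x_i}/Σ_j e^{x_j}. Then σ is (1/2)-Lipschitz with respect to the ℓ1 norm: Σ_i |σ(x)_i − σ(y)_i| ≤ (1/2) Σ_i |x_i − y_i| for all x, y ∈ R^K. -/

import Mathlib

open Finset

lemma softmax_key {K : ℕ} (p d : Fin K → ℝ) (hp : ∀ i, 0 ≤ p i) (hs : ∑ i, p i = 1) :
    ∑ i, p i * |d i - ∑ j, p j * d j| ≤ (1/2) * ∑ i, |d i| := by
  have hp1 : ∀ i, p i ≤ 1 := by
    intro i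
    calc p i ≤ ∑ j, p j := Finset.single_le_sum (fun j _ => hp j) (mem_univ i)
    _ = 1 := hs
  have stepA : ∑ i, p i * |d i - ∑ j, p j * d j| ≤
      ∑ i, ∑ j, p i * p j * |d i - d j| := by
    apply Finset.sum_le_sum
    intro i _
    have hrw : d i - ∑ j, p j * d j = ∑ j, p j * (d i - d j) := by
      simp [mul_sub, Finset.sum_sub_distrib, ← Finset.sum_mul, hs, mul_comm]
    rw [hrw]
    calc p i * |∑ j, p j * (d i - d j)| ≤ p i * ∑ j, |p j * (d i - d j)| := by
          apply mul_le_mul_of_nonneg_left (Finset.abs_sum_le_sum_abs _ _) (hp i)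
    _ = ∑ j, p i * p j * |d i - d j| := by
          rw [Finset.mul_sum]
          congr 1; ext j
          rw [abs_mul, abs_of_nonneg (hp j)]; ring
  have stepB : ∑ i, ∑ j, p i * p j * |d i - d j| ≤
      ∑ i, ∑ j, (p i * p j * (|d i| + |d j|) - (if i = j then 2 * p i ^ 2 * |d i| else 0)) := by
    apply Finset.sum_le_sum; intro i _
    apply Finset.sum_le_sum; intro j _
    by_cases hij : i = j
    · subst hij; simp; nlinarith [abs_nonneg (d i), sq_nonneg (p i)]
    · simp [hij]
      nlinarith [abs_sub (d i) (d j), mul_nonneg (hp i) (hp j),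
        abs_nonneg (d i), abs_nonneg (d j)]
  have inner : ∀ i : Fin K,
      ∑ j, (p i * p j * (|d i| + |d j|) - (if i = j then 2 * p i ^ 2 * |d i| else 0))
      = p i * |d i| + p i * (∑ j, p j * |d j|) - 2 * p i ^ 2 * |d i| := by
    intro i
    rw [Finset.sum_sub_distrib]
    simp only [Finset.sum_ite_eq, mem_univ, if_true]
    congr 1
    have h : ∀ j : Fin K, p i * p j * (|d i| + |d j|)
        = p i * |d i| * p j + p i * (p j * |d j|) := fun j => by ring
    rw [Finset.sum_congr rfl (fun j _ => h j), Finset.sum_add_distrib,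
      ← Finset.mul_sum, ← Finset.mul_sum, hs, mul_one]
  have stepC : ∑ i, ∑ j, (p i * p j * (|d i| + |d j|) -
      (if i = j then 2 * p i ^ 2 * |d i| else 0)) = 2 * ∑ i, p i * (1 - p i) * |d i| := by
    rw [Finset.sum_congr rfl (fun i _ => inner i), Finset.sum_sub_distrib,
      Finset.sum_add_distrib, ← Finset.sum_mul, hs, one_mul]
    have h2 : 2 * ∑ i, p i * (1 - p i) * |d i|
        = ∑ i, p i * |d i| + ∑ j, p j * |d j| - ∑ i, 2 * p i ^ 2 * |d i| := by
      rw [Finset.mul_sum, ← Finset.sum_add_distrib, ← Finset.sum_sub_distrib]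
      exact Finset.sum_congr rfl fun i _ => by ring
    rw [h2]
  have stepD : 2 * ∑ i, p i * (1 - p i) * |d i| ≤ (1/2) * ∑ i, |d i| := by
    have : ∀ i : Fin K, p i * (1 - p i) * |d i| ≤ (1/4) * |d i| := by
      intro i
      nlinarith [abs_nonneg (d i), sq_nonneg (p i - 1/2), hp i, hp1 i]
    calc 2 * ∑ i, p i * (1 - p i) * |d i| ≤ 2 * ∑ i, (1/4) * |d i| := by
          apply mul_le_mul_of_nonneg_left (Finset.sum_le_sum fun i _ => this i) (by norm_num)
    _ = (1/2) * ∑ i, |d i| := by rw [← Finset.mul_sum]; ring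
  calc ∑ i, p i * |d i - ∑ j, p j * d j| ≤ ∑ i, ∑ j, p i * p j * |d i - d j| := stepA
  _ ≤ _ := stepB
  _ = 2 * ∑ i, p i * (1 - p i) * |d i| := stepC
  _ ≤ (1/2) * ∑ i, |d i| := stepD

lemma softmax_div_aux (E di s s' : ℝ) (h0 : s ≠ 0) :
    (E * di * s - E * s') / s ^ 2 = E / s * (di - s' / s) := by
  field_simp

/-- Softmax is `1/2`-Lipschitz with respect to the `ℓ1` norm. -/
theorem softmax_l1_lipschitz
    {K : ℕ} (x y : Fin K → ℝ) :
    ∑ i, |Real.exp (x i) / ∑ j, Real.exp (x j) -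
          Real.exp (y i) / ∑ j, Real.exp (y j)| ≤
      (1 / 2) * ∑ i, |x i - y i| := by
  rcases Nat.eq_zero_or_pos K with hK | hK
  · subst hK; simp
  haveI : Nonempty (Fin K) := Fin.pos_iff_nonempty.mp hK
  set d : Fin K → ℝ := fun i => x i - y i with hd
  set S : ℝ → ℝ := fun t => ∑ j, Real.exp (y j + t * d j) with hSdef
  have hSpos : ∀ t, 0 < S t := fun t =>
    Finset.sum_pos (fun j _ => Real.exp_pos _) univ_nonempty
  set p : ℝ → Fin K → ℝ := fun t i => Real.exp (y i + t * d i) / S t with hpdef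
  have hp0 : ∀ t i, 0 ≤ p t i := fun t i =>
    div_nonneg (Real.exp_pos _).le (hSpos t).le
  have hpsum : ∀ t, ∑ i, p t i = 1 := by
    intro t
    rw [hpdef]
    simp only
    rw [← Finset.sum_div, div_self (hSpos t).ne']
  set ε : Fin K → ℝ := fun i => if p 0 i ≤ p 1 i then 1 else -1 with hε
  set h : ℝ → ℝ := fun t => ∑ i, ε i * p t i with hh
  set S' : ℝ → ℝ := fun t => ∑ j, Real.exp (y j + t * d j) * d j with hS'
  have hSd : ∀ t, HasDerivAt S (S' t) t := by
    intro t
    apply HasDerivAt.fun_sum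
    intro j _
    have h1 : HasDerivAt (fun t : ℝ => y j + t * d j) (d j) t := by
      simpa using ((hasDerivAt_id t).mul_const (d j)).const_add (y j)
    simpa using h1.exp
  set h' : ℝ → ℝ := fun t => ∑ i, ε i *
    ((Real.exp (y i + t * d i) * d i * S t - Real.exp (y i + t * d i) * S' t) / (S t) ^ 2)
    with hh'
  have hhd : ∀ t, HasDerivAt h (h' t) t := by
    intro t
    apply HasDerivAt.fun_sum
    intro i _
    apply HasDerivAt.const_mul
    have h1 : HasDerivAt (fun t : ℝ => y i + t * d i) (d i) t := by
      simpa using ((hasDerivAt_id t).mul_const (d i)).const_add (y i)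
    exact (h1.exp).div (hSd t) (hSpos t).ne'
  have keybound : ∀ t, |h' t| ≤ (1/2) * ∑ i, |d i| := by
    intro t
    have hz : ∀ i, (Real.exp (y i + t * d i) * d i * S t -
        Real.exp (y i + t * d i) * S' t) / (S t) ^ 2
        = p t i * (d i - ∑ j, p t j * d j) := by
      intro i
      have hm : ∑ j, p t j * d j = S' t / S t := by
        rw [hS']
        simp only
        rw [Finset.sum_div]
        exact Finset.sum_congr rfl fun j _ => by rw [hpdef]; ring
      have h0 : S t ≠ 0 := (hSpos t).ne'
      rw [hm, hpdef]
      exact softmax_div_aux _ _ _ _ h0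
    calc |h' t| ≤ ∑ i, |ε i * ((Real.exp (y i + t * d i) * d i * S t -
          Real.exp (y i + t * d i) * S' t) / (S t) ^ 2)| :=
        Finset.abs_sum_le_sum_abs _ _
    _ = ∑ i, p t i * |d i - ∑ j, p t j * d j| := by
        apply Finset.sum_congr rfl
        intro i _
        rw [abs_mul, hz i, abs_mul, abs_of_nonneg (hp0 t i)]
        have : |ε i| = 1 := by rw [hε]; simp only; split <;> simp
        rw [this, one_mul]
    _ ≤ (1/2) * ∑ i, |d i| := softmax_key (p t) d (hp0 t) (hpsum t)
  -- MVT
  have mvt : ‖h 1 - h 0‖ ≤ ((1/2) * ∑ i, |d i|) * (1 - 0) := by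
    apply norm_image_sub_le_of_norm_deriv_le_segment'
      (fun t _ => (hhd t).hasDerivWithinAt)
      (fun t _ => by rw [Real.norm_eq_abs]; exact keybound t)
    exact Set.right_mem_Icc.mpr zero_le_one
  have hx1 : ∀ i, p 1 i = Real.exp (x i) / ∑ j, Real.exp (x j) := by
    intro i
    rw [hpdef, hSdef]
    simp only
    have e : ∀ j : Fin K, y j + 1 * d j = x j := fun j => by rw [hd]; ring
    rw [e i, Finset.sum_congr rfl fun j _ => by rw [e j]]
  have hy0 : ∀ i, p 0 i = Real.exp (y i) / ∑ j, Real.exp (y j) := by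
    intro i
    rw [hpdef, hSdef]
    simp only
    have e : ∀ j : Fin K, y j + 0 * d j = y j := fun j => by ring
    rw [e i, Finset.sum_congr rfl fun j _ => by rw [e j]]
  have final : ∑ i, |Real.exp (x i) / ∑ j, Real.exp (x j) -
      Real.exp (y i) / ∑ j, Real.exp (y j)| = h 1 - h 0 := by
    rw [hh]
    simp only
    rw [← Finset.sum_sub_distrib]
    apply Finset.sum_congr rfl
    intro i _
    rw [← hx1 i, ← hy0 i, hε]
    simp only
    split_ifs with hc
    · rw [abs_of_nonneg (by linarith)]; ring
    · push_neg at hc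
      rw [abs_of_neg (by linarith)]; ring
  rw [final]
  calc h 1 - h 0 ≤ |h 1 - h 0| := le_abs_self _
  _ ≤ (1/2) * ∑ i, |d i| := by
      rw [← Real.norm_eq_abs]
      simpa using mvt
  _ = (1/2) * ∑ i, |x i - y i| := by rw [hd]
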